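/- arXiv:1208.6184 — 2 statements merged into one kernel-verified Lean document; each statement's English description precedes it below -/
import Mathlib

section
/- Let k : ℝⁿ × ℝⁿ → ℝ be a measurable kernel for which there exist C, δ > 0 such that |k(x,y) − k(x',y)| ≤ C·|x − x'|^δ / |x − y|^{n+δ} whenever x, x' ∈ Q and y ∈ (2Q)^c for some cube Q. Let T be a linear operator on integrable functions such that: (1) T is of weak type (1,1), i.e. |{x : |Tg(x)| > λ}| ≤ C‖g‖_{L¹}/λ for all λ > 0; and (2) whenever g is integrable and x lies outside the support of g, Tg(x) = ∫ k(x,y) g(y) dy. Then for every 0 < s ≤ 1/2 there is a constant c (depending on n, δ, s and the constants of T) such that for every cube Q₀ ⊂ ℝⁿ, every integrable f, and every x ∈ Q₀, M♯_{0,s,Q₀}(Tf)(x) ≤ c · sup_{x ∈ Q, Q ⊂ Q₀} inf_{y ∈ Q} Mf(y). -/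
open MeasureTheory ENNReal

namespace LocalMedian

/-- Euclidean space `ℝⁿ`. -/
abbrev Sp (n : ℕ) := EuclideanSpace ℝ (Fin n)

/-- An axis-parallel cube in `ℝⁿ`, given by its lower corner and (positive) sidelength. -/
structure Cube (n : ℕ) where
  corner : Sp n
  side : ℝ
  side_pos : 0 < side

namespace Cube

variable {n : ℕ}

/-- The set of points of the cube. -/
def set (Q : Cube n) : Set (Sp n) :=
  {x | ∀ i, Q.corner i ≤ x i ∧ x i ≤ Q.corner i + Q.side}

/-- The center of the cube. -/
noncomputable def center (Q : Cube n) : Sp n := WithLp.toLp 2 (fun i => Q.corner i + Q.side / 2)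

/-- The cube concentric with `Q` whose sidelength is `r` times that of `Q`. -/
noncomputable def dilate (Q : Cube n) (r : ℝ) (hr : 0 < r) : Cube n where
  corner := WithLp.toLp 2 (fun i => Q.center i - r * Q.side / 2)
  side := r * Q.side
  side_pos := mul_pos hr Q.side_pos

/-- `Q` is a dyadic subcube of `Q₀`, i.e. obtained from `Q₀` by repeated dyadic
subdivision into `2ⁿ` congruent subcubes. -/
def dyadicSub (Q₀ Q : Cube n) : Prop :=
  ∃ (k : ℕ) (m : Fin n → ℕ), (∀ i, m i < 2 ^ k) ∧
    Q.side = Q₀.side / 2 ^ k ∧ ∀ i, Q.corner i = Q₀.corner i + Q.side * m i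

/-- `Q` is one of the `2ⁿ` dyadic children of `P` (so `P` is the dyadic parent of `Q`). -/
def isDyadicChild (Q P : Cube n) : Prop :=
  Q.side = P.side / 2 ∧ ∃ m : Fin n → ℕ, (∀ i, m i < 2) ∧
    ∀ i, Q.corner i = P.corner i + Q.side * m i

end Cube

variable {n : ℕ}

/-- The (maximal) median of `f` over the cube `Q` with parameter `t`:
`m_f(t,Q) = sup { M : |{y ∈ Q : f y < M}| ≤ t|Q| }`. -/
noncomputable def median (f : Sp n → ℝ) (t : ℝ) (Q : Cube n) : ℝ :=
  sSup {M : ℝ | volume {y ∈ Q.set | f y < M} ≤ ENNReal.ofReal t * volume Q.set}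

/-- The local oscillation `inf_c inf {α ≥ 0 : |{y ∈ Q : |f y - c| > α}| < s|Q|}`. -/
noncomputable def osc (f : Sp n → ℝ) (s : ℝ) (Q : Cube n) : ℝ :=
  ⨅ c : ℝ, sInf {α : ℝ | 0 ≤ α ∧
    volume {y ∈ Q.set | α < |f y - c|} < ENNReal.ofReal s * volume Q.set}

/-- The local sharp maximal function `M♯_{0,s,Q₀} f`, restricted to the cube `Q₀`. -/
noncomputable def sharpLoc (f : Sp n → ℝ) (s : ℝ) (Q₀ : Cube n) (x : Sp n) : ℝ≥0∞ :=
  ⨆ Q : {Q : Cube n // x ∈ Q.set ∧ Q.set ⊆ Q₀.set}, ENNReal.ofReal (osc f s Q.1)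

/-- The local sharp maximal function `M♯_{0,s} f` (over all cubes containing `x`). -/
noncomputable def sharp (f : Sp n → ℝ) (s : ℝ) (x : Sp n) : ℝ≥0∞ :=
  ⨆ Q : {Q : Cube n // x ∈ Q.set}, ENNReal.ofReal (osc f s Q.1)

/-- The Hardy–Littlewood maximal function (over cubes containing `x`). -/
noncomputable def maximal (f : Sp n → ℝ) (x : Sp n) : ℝ≥0∞ :=
  ⨆ Q : {Q : Cube n // x ∈ Q.set},
    (∫⁻ y in Q.1.set, ENNReal.ofReal |f y|) / volume Q.1.set

/-- The Hardy–Littlewood maximal function of an `ℝ≥0∞`-valued function. -/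
noncomputable def maximalE (g : Sp n → ℝ≥0∞) (x : Sp n) : ℝ≥0∞ :=
  ⨆ Q : {Q : Cube n // x ∈ Q.set}, (∫⁻ y in Q.1.set, g y) / volume Q.1.set

/-- The average `(1/|Q|) ∫_Q g`. -/
noncomputable def cubeAvg (g : Sp n → ℝ) (Q : Cube n) : ℝ :=
  (volume Q.set).toReal⁻¹ * ∫ y in Q.set, g y

/-- The Fefferman–Stein sharp maximal function
`M♯ g(x) = sup_{Q ∋ x} (1/|Q|) ∫_Q |g - g_Q|`. -/
noncomputable def fsSharp (g : Sp n → ℝ) (x : Sp n) : ℝ≥0∞ :=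
  ⨆ Q : {Q : Cube n // x ∈ Q.set},
    ENNReal.ofReal (cubeAvg (fun y => |g y - cubeAvg g Q.1|) Q.1)


-- auxiliary lemmas
namespace Cube

lemma mem_set_iff (Q : Cube n) (x : Sp n) :
    x ∈ Q.set ↔ ∀ i, |x i - Q.center i| ≤ Q.side / 2 := by
  unfold set center
  simp only [Set.mem_setOf_eq, abs_le, PiLp.toLp_apply]
  constructor <;> intro h i <;> have := h i <;> constructor <;> linarith [(this.1), (this.2)]

lemma mem_dilate_iff (Q : Cube n) (r : ℝ) (hr : 0 < r) (x : Sp n) :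
    x ∈ (Q.dilate r hr).set ↔ ∀ i, |x i - Q.center i| ≤ r * Q.side / 2 := by
  unfold set dilate
  simp only [Set.mem_setOf_eq, abs_le, PiLp.toLp_apply]
  constructor <;> intro h i <;> have := h i <;> constructor <;> linarith [(this.1), (this.2)]

lemma center_mem (Q : Cube n) : Q.center ∈ Q.set := by
  rw [mem_set_iff]
  intro i
  simp only [sub_self, abs_zero]
  linarith [Q.side_pos]

lemma set_nonempty (Q : Cube n) : Q.set.Nonempty := ⟨Q.center, Q.center_mem⟩

lemma subset_dilate (Q : Cube n) (r : ℝ) (hr : 0 < r) (h1 : 1 ≤ r) :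
    Q.set ⊆ (Q.dilate r hr).set := by
  intro x hx
  rw [mem_set_iff] at hx
  rw [mem_dilate_iff]
  intro i
  have := hx i
  nlinarith [Q.side_pos]

lemma dilate_subset_dilate (Q : Cube n) {r r' : ℝ} (hr : 0 < r) (hr' : 0 < r') (h : r ≤ r') :
    (Q.dilate r hr).set ⊆ (Q.dilate r' hr').set := by
  intro x hx
  rw [mem_dilate_iff] at hx ⊢
  intro i
  have := hx i
  nlinarith [Q.side_pos]

lemma isClosed_set (Q : Cube n) : IsClosed Q.set := by
  have : Q.set = ⋂ i, (fun x : Sp n => x i) ⁻¹' (Set.Icc (Q.corner i) (Q.corner i + Q.side)) := by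
    ext x; simp [set, Set.mem_iInter, Set.mem_Icc]
  rw [this]
  exact isClosed_iInter fun i =>
    (isClosed_Icc).preimage (EuclideanSpace.proj (𝕜 := ℝ) i).continuous

lemma measurableSet_set (Q : Cube n) : MeasurableSet Q.set := Q.isClosed_set.measurableSet

lemma volume_set (Q : Cube n) : volume Q.set = ENNReal.ofReal (Q.side ^ n) := by
  have he : Q.set = (MeasurableEquiv.toLp 2 (Fin n → ℝ)).symm ⁻¹'
      (Set.univ.pi fun i => Set.Icc (Q.corner i) (Q.corner i + Q.side)) := by
    ext x
    simp only [Set.mem_preimage, Set.mem_univ_pi, Set.mem_Icc, set, Set.mem_setOf_eq]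
    exact Iff.rfl
  rw [he, (EuclideanSpace.volume_preserving_symm_measurableEquiv_toLp (Fin n)).measure_preimage
    (by measurability)]
  rw [volume_pi_pi]
  simp [Real.volume_Icc, ENNReal.ofReal_pow (le_of_lt Q.side_pos)]

lemma volume_set_pos (Q : Cube n) : 0 < volume Q.set := by
  rw [volume_set]
  exact ENNReal.ofReal_pos.2 (pow_pos Q.side_pos n)

lemma volume_set_ne_top (Q : Cube n) : volume Q.set ≠ ⊤ := by
  rw [volume_set]; exact ENNReal.ofReal_ne_top

lemma coord_abs_le_norm (x y : Sp n) (i : Fin n) : |x i - y i| ≤ ‖x - y‖ := by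
  have h : (x - y) i = x i - y i := rfl
  rw [← h, EuclideanSpace.norm_eq]
  have h1 : |(x-y) i| = Real.sqrt (|(x-y) i| ^ 2) := by
    rw [Real.sqrt_sq_eq_abs, abs_abs]
  rw [h1]
  apply Real.sqrt_le_sqrt
  have : ‖(x-y) i‖ ^ 2 = |(x-y) i| ^2 := by rw [Real.norm_eq_abs]
  rw [← this]
  exact Finset.single_le_sum (f := fun j => ‖(x-y) j‖^2) (fun j _ => by positivity) (Finset.mem_univ i)

lemma norm_sub_le_of_mem (Q : Cube n) {z x : Sp n} (hz : z ∈ Q.set) (hx : x ∈ Q.set) :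
    ‖z - x‖ ≤ Real.sqrt n * Q.side := by
  rw [EuclideanSpace.norm_eq]
  have hcoord : ∀ i, ‖(z - x) i‖ ^ 2 ≤ Q.side ^ 2 := by
    intro i
    have h1 := (Q.mem_set_iff z).1 hz i
    have h2 := (Q.mem_set_iff x).1 hx i
    have h : |(z - x) i| ≤ Q.side := by
      have : (z - x) i = (z i - Q.center i) - (x i - Q.center i) := by
        show z i - x i = _; ring
      rw [this]
      calc |(z i - Q.center i) - (x i - Q.center i)| ≤ |z i - Q.center i| + |x i - Q.center i| :=
            abs_sub _ _
        _ ≤ Q.side := by linarith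
    calc ‖(z - x) i‖ ^ 2 = |(z - x) i| ^ 2 := by rw [Real.norm_eq_abs]
      _ ≤ Q.side ^ 2 := by nlinarith [abs_nonneg ((z-x) i)]
  calc Real.sqrt (∑ i, ‖(z - x) i‖ ^ 2) ≤ Real.sqrt (∑ _i : Fin n, Q.side ^ 2) :=
        Real.sqrt_le_sqrt (Finset.sum_le_sum fun i _ => hcoord i)
    _ = Real.sqrt n * Q.side := by
        rw [Finset.sum_const, Finset.card_univ, Fintype.card_fin, nsmul_eq_mul,
          Real.sqrt_mul (Nat.cast_nonneg n), Real.sqrt_sq (le_of_lt Q.side_pos)]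

lemma mem_interior_dilate (Q : Cube n) {z : Sp n} (hz : z ∈ Q.set) :
    z ∈ interior (Q.dilate 2 (by norm_num)).set := by
  rw [mem_interior_iff_mem_nhds, Metric.mem_nhds_iff]
  refine ⟨Q.side / 2, by linarith [Q.side_pos], fun w hw => ?_⟩
  rw [mem_dilate_iff]
  intro i
  have h1 := (Q.mem_set_iff z).1 hz i
  have h2 : |w i - z i| ≤ Q.side / 2 := by
    have := coord_abs_le_norm w z i
    have hd : ‖w - z‖ < Q.side / 2 := by
      simpa [dist_eq_norm] using Metric.mem_ball.1 hw
    linarith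
  calc |w i - Q.center i| ≤ |w i - z i| + |z i - Q.center i| := abs_sub_le _ _ _
    _ ≤ 2 * Q.side / 2 := by linarith
end Cube

lemma pow_calc {C δ L A : ℝ} (hC : 0 < C) (hδ : 0 < δ) (hL : 0 < L) (hA : 0 ≤ A) (n j : ℕ) :
    C * (Real.sqrt n * L) ^ δ / (L * 2 ^ j / 2) ^ ((n : ℝ) + δ) * (A * ((2:ℝ) ^ (j+2) * L) ^ n)
      ≤ C * Real.sqrt n ^ δ * 2 ^ (3*(n:ℝ)+δ) * A * ((2:ℝ) ^ (-δ)) ^ j := by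
  have h2 : (0:ℝ) ≤ 2 := by norm_num
  have e1 : ((2:ℝ) ^ (j+2) * L) ^ n = (2:ℝ) ^ ((j+2)*n : ℕ) * L ^ n := by
    rw [mul_pow, ← pow_mul]
  have e2 : (L * 2 ^ j / 2 : ℝ) = L * (2:ℝ) ^ ((j:ℝ) - 1) := by
    rw [Real.rpow_sub (by norm_num : (0:ℝ) < 2), Real.rpow_natCast, Real.rpow_one]; ring
  apply le_of_eq
  rw [e1, e2]
  rw [Real.mul_rpow (le_of_lt hL) (Real.rpow_nonneg h2 _)]
  rw [← Real.rpow_natCast (2:ℝ) ((j+2)*n), ← Real.rpow_natCast L n,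
    ← Real.rpow_natCast ((2:ℝ) ^ (-δ)) j]
  rw [← Real.rpow_mul h2 ((j:ℝ) - 1) ((n:ℝ) + δ), ← Real.rpow_mul h2 (-δ) (j:ℝ)]
  rw [Real.mul_rpow (Real.sqrt_nonneg _) (le_of_lt hL)]
  rw [Real.rpow_add hL (n:ℝ) δ]
  have e3 : (2:ℝ) ^ ((((j+2)*n : ℕ)):ℝ) =
      2 ^ (((j:ℝ) - 1)*((n:ℝ)+δ)) * (2 ^ (3*(n:ℝ)+δ) * 2 ^ (-δ*(j:ℝ))) := by
    rw [← Real.rpow_add (by norm_num : (0:ℝ) < 2), ← Real.rpow_add (by norm_num : (0:ℝ) < 2)]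
    congr 1; push_cast; ring
  rw [e3]
  have hX : (2:ℝ) ^ (((j:ℝ) - 1)*((n:ℝ)+δ)) ≠ 0 := ne_of_gt (Real.rpow_pos_of_pos (by norm_num) _)
  have hLn : L ^ (n:ℝ) ≠ 0 := ne_of_gt (Real.rpow_pos_of_pos hL _)
  have hLδ : L ^ δ ≠ 0 := ne_of_gt (Real.rpow_pos_of_pos hL _)
  field_simp

lemma annuli_bound {n : ℕ} (k : Sp n → Sp n → ℝ) {C δ : ℝ} (hC : 0 < C) (hδ : 0 < δ)
    (hker : ∀ (Q : Cube n), ∀ x ∈ Q.set, ∀ x' ∈ Q.set,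
      ∀ y ∉ (Q.dilate 2 (by norm_num)).set,
        |k x y - k x' y| ≤ C * ‖x - x'‖ ^ δ / ‖x - y‖ ^ ((n : ℝ) + δ))
    (Q : Cube n) (f f₂ : Sp n → ℝ)
    (hvan : ∀ w ∈ (Q.dilate 2 (by norm_num)).set, f₂ w = 0)
    (hdom : ∀ w, |f₂ w| ≤ |f w|)
    {y : Sp n} (hy : y ∈ Q.set) {A : ℝ} (hA0 : 0 ≤ A)
    (hA : ∀ P : Cube n, y ∈ P.set →
      (∫⁻ w in P.set, ENNReal.ofReal |f w|) ≤ ENNReal.ofReal A * volume P.set)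
    {z x₀ : Sp n} (hz : z ∈ Q.set) (hx₀ : x₀ ∈ Q.set) :
    (∫⁻ w, ENNReal.ofReal |(k z w - k x₀ w) * f₂ w|) ≤
      ENNReal.ofReal ((C * Real.sqrt n ^ δ * 2 ^ (3*(n:ℝ)+δ) * (1 - (2:ℝ) ^ (-δ))⁻¹) * A) := by
  classical
  set L := Q.side with hLdef
  have hL : 0 < L := Q.side_pos
  set ρ := (2:ℝ) ^ (-δ) with hρdef
  have hρ0 : 0 ≤ ρ := Real.rpow_nonneg (by norm_num) _
  have hρ1 : ρ < 1 := by
    rw [hρdef, Real.rpow_neg (by norm_num)]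
    rw [inv_lt_one_iff₀]
    right
    rw [show (1:ℝ) = 1 ^ δ from (Real.one_rpow δ).symm]
    exact Real.rpow_lt_rpow (by norm_num) (by norm_num) hδ
  have hKc0 : 0 ≤ C * Real.sqrt n ^ δ * 2 ^ (3*(n:ℝ)+δ) :=
    mul_nonneg (mul_nonneg hC.le (Real.rpow_nonneg (Real.sqrt_nonneg _) _))
      (Real.rpow_nonneg (by norm_num) _)
  set g : Sp n → ℝ≥0∞ := fun w => ENNReal.ofReal |(k z w - k x₀ w) * f₂ w| with hgdef
  set Dil : ℕ → Cube n := fun m => Q.dilate (2 ^ m) (pow_pos (by norm_num) m) with hDil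
  set B : ℕ → Set (Sp n) := fun j => (Dil (j+2)).set \ (Dil (j+1)).set with hB
  have hDmem : ∀ (m : ℕ) (x : Sp n), x ∈ (Dil m).set ↔
      ∀ i, |x i - Q.center i| ≤ 2 ^ m * L / 2 := fun m x => Q.mem_dilate_iff _ _ x
  have hBmeas : ∀ j, MeasurableSet (B j) :=
    fun j => ((Dil (j+2)).measurableSet_set).diff ((Dil (j+1)).measurableSet_set)
  have hmono : ∀ {a b : ℕ}, a ≤ b → (Dil a).set ⊆ (Dil b).set := by
    intro a b hab
    exact Q.dilate_subset_dilate _ _ (pow_le_pow_right₀ (by norm_num) hab)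
  have hBdisj : Pairwise (Function.onFun Disjoint B) := by
    have key : ∀ a b : ℕ, a < b → Disjoint (B a) (B b) := by
      intro a b hab
      rw [Set.disjoint_left]
      rintro w ⟨hw1, -⟩ ⟨-, hw2⟩
      exact hw2 (hmono (by omega) hw1)
    intro a b hab
    rcases lt_or_gt_of_ne hab with h | h
    · exact key a b h
    · exact (key b a h).symm
  have h2Q : (Q.dilate 2 (by norm_num)).set = (Dil 1).set := by
    ext x
    rw [Q.mem_dilate_iff, hDmem]
    norm_num
    exact Iff.rfl
  have hUnion : ((Q.dilate 2 (by norm_num : (0:ℝ) < 2)).set)ᶜ = ⋃ j, B j := by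
    ext w
    simp only [Set.mem_compl_iff, Set.mem_iUnion]
    constructor
    · intro hw
      have hex : ∃ m, w ∈ (Dil (m+1)).set := by
        obtain ⟨m, hm⟩ := pow_unbounded_of_one_lt (‖w - Q.center‖ * 2 / L) (by norm_num : (1:ℝ) < 2)
        refine ⟨m, (hDmem _ _).2 fun i => ?_⟩
        have h1 := Cube.coord_abs_le_norm w Q.center i
        have h2 : ‖w - Q.center‖ < 2 ^ m * L / 2 := by
          rw [div_lt_iff₀ hL] at hm; nlinarith
        have h3 : (2:ℝ) ^ m * L / 2 ≤ 2 ^ (m+1) * L / 2 := by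
          have hp : (2:ℝ) ^ m ≤ 2 ^ (m+1) := by
            apply pow_le_pow_right₀ (by norm_num); omega
          nlinarith
        linarith
      set m₀ := Nat.find hex with hm₀
      have hspec : w ∈ (Dil (m₀+1)).set := Nat.find_spec hex
      have hm₀pos : m₀ ≠ 0 := by
        intro h0
        apply hw
        rw [h2Q]
        have : w ∈ (Dil (0+1)).set := by rw [← h0]; exact hspec
        simpa using this
      refine ⟨m₀ - 1, ?_, ?_⟩
      · have : m₀ - 1 + 2 = m₀ + 1 := by omega
        rw [this]; exact hspec
      · have hlt : m₀ - 1 < m₀ := by omega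
        have := Nat.find_min hex hlt
        have heq : m₀ - 1 + 1 = m₀ := by omega
        rw [heq]; rw [heq] at this; exact this
    · rintro ⟨j, hj, hj2⟩ hwmem
      apply hj2
      rw [h2Q] at hwmem
      exact hmono (by omega : 1 ≤ j + 1) hwmem
  -- pointwise bound on the annulus
  have hbound : ∀ (j : ℕ), ∀ w ∈ B j, g w ≤
      ENNReal.ofReal (C * (Real.sqrt n * L) ^ δ / (L * 2 ^ j / 2) ^ ((n:ℝ) + δ)) *
        ENNReal.ofReal |f w| := by
    intro j w hw
    obtain ⟨hw2, hw1⟩ := hw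
    have h1j : (1:ℝ) ≤ 2 ^ j := one_le_pow₀ (by norm_num)
    have hzj : z ∈ (Dil j).set := Q.subset_dilate _ _ h1j hz
    have hx₀j : x₀ ∈ (Dil j).set := Q.subset_dilate _ _ h1j hx₀
    have hwout : w ∉ ((Dil j).dilate 2 (by norm_num)).set := by
      intro hmem
      apply hw1
      rw [(Dil j).mem_dilate_iff] at hmem
      rw [hDmem]
      intro i
      have h := hmem i
      have hcen : (Dil j).center = Q.center := by
        ext i
        show (Dil j).corner i + (Dil j).side / 2 = _
        show (Q.center i - 2 ^ j * Q.side / 2) + (2 ^ j * Q.side) / 2 = _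
        ring
      have hside : (Dil j).side = 2 ^ j * L := rfl
      rw [hcen, hside] at h
      calc |w i - Q.center i| ≤ 2 * (2 ^ j * L) / 2 := h
        _ = 2 ^ (j+1) * L / 2 := by rw [pow_succ]; ring
    have hkerb := hker (Dil j) z hzj x₀ hx₀j w hwout
    -- lower bound for ‖z - w‖
    obtain ⟨i, hi⟩ : ∃ i, 2 ^ j * L < |w i - Q.center i| := by
      by_contra hcon
      push_neg at hcon
      apply hw1
      rw [hDmem]
      intro i
      calc |w i - Q.center i| ≤ 2 ^ j * L := hcon i
        _ = 2 ^ (j+1) * L / 2 := by rw [pow_succ]; ring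
    have hzi : |z i - Q.center i| ≤ L / 2 := (Q.mem_set_iff z).1 hz i
    have hzwc : L * 2 ^ j / 2 ≤ ‖z - w‖ := by
      have h1 := Cube.coord_abs_le_norm z w i
      have h2 : |w i - Q.center i| - |z i - Q.center i| ≤ |z i - w i| := by
        have h3 := abs_sub_abs_le_abs_sub (w i - Q.center i) (z i - Q.center i)
        have he : (w i - Q.center i) - (z i - Q.center i) = w i - z i := by ring
        rw [he] at h3
        rw [abs_sub_comm (z i) (w i)]
        linarith
      nlinarith [h1j, hL]
    have hrj : (0:ℝ) < L * 2 ^ j / 2 := by positivity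
    have hkb2 : |k z w - k x₀ w| ≤ C * (Real.sqrt n * L) ^ δ / (L * 2 ^ j / 2) ^ ((n:ℝ) + δ) := by
      refine le_trans hkerb ?_
      apply div_le_div₀ (by positivity)
      · exact mul_le_mul_of_nonneg_left
          (Real.rpow_le_rpow (norm_nonneg _) (Q.norm_sub_le_of_mem hz hx₀) hδ.le) hC.le
      · exact Real.rpow_pos_of_pos hrj _
      · exact Real.rpow_le_rpow hrj.le hzwc (by positivity)
    calc g w = ENNReal.ofReal (|k z w - k x₀ w| * |f₂ w|) := by
          have habs : |(k z w - k x₀ w) * f₂ w| = |k z w - k x₀ w| * |f₂ w| := abs_mul _ _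
          simp only [hgdef, habs]
      _ ≤ ENNReal.ofReal ((C * (Real.sqrt n * L) ^ δ / (L * 2 ^ j / 2) ^ ((n:ℝ) + δ)) * |f w|) := by
          apply ENNReal.ofReal_le_ofReal
          exact mul_le_mul hkb2 (hdom w) (abs_nonneg _) (by positivity)
      _ = _ := ENNReal.ofReal_mul (by positivity)
  -- per-annulus integral bound
  have hannulus : ∀ j : ℕ, (∫⁻ w in B j, g w) ≤
      ENNReal.ofReal (C * Real.sqrt n ^ δ * 2 ^ (3*(n:ℝ)+δ) * A) * (ENNReal.ofReal ρ) ^ j := by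
    intro j
    have hyj : y ∈ (Dil (j+2)).set := Q.subset_dilate _ _ (one_le_pow₀ (by norm_num)) hy
    have hvolD : volume (Dil (j+2)).set = ENNReal.ofReal (((2:ℝ) ^ (j+2) * L) ^ n) :=
      (Dil (j+2)).volume_set
    calc (∫⁻ w in B j, g w)
        ≤ ∫⁻ w in B j, ENNReal.ofReal (C * (Real.sqrt n * L) ^ δ / (L * 2 ^ j / 2) ^ ((n:ℝ) + δ))
            * ENNReal.ofReal |f w| := by
          rw [← lintegral_indicator (hBmeas j), ← lintegral_indicator (hBmeas j)]
          apply lintegral_mono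
          intro w
          by_cases hw : w ∈ B j
          · rw [Set.indicator_of_mem hw, Set.indicator_of_mem hw]; exact hbound j w hw
          · rw [Set.indicator_of_notMem hw, Set.indicator_of_notMem hw]
      _ = ENNReal.ofReal (C * (Real.sqrt n * L) ^ δ / (L * 2 ^ j / 2) ^ ((n:ℝ) + δ))
            * ∫⁻ w in B j, ENNReal.ofReal |f w| := lintegral_const_mul' _ _ ENNReal.ofReal_ne_top
      _ ≤ ENNReal.ofReal (C * (Real.sqrt n * L) ^ δ / (L * 2 ^ j / 2) ^ ((n:ℝ) + δ))
            * (ENNReal.ofReal A * volume (Dil (j+2)).set) := by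
          apply mul_le_mul_right
          exact le_trans (lintegral_mono_set Set.diff_subset) (hA (Dil (j+2)) hyj)
      _ = ENNReal.ofReal ((C * (Real.sqrt n * L) ^ δ / (L * 2 ^ j / 2) ^ ((n:ℝ) + δ))
            * (A * ((2:ℝ) ^ (j+2) * L) ^ n)) := by
          rw [hvolD, ← ENNReal.ofReal_mul hA0, ← ENNReal.ofReal_mul (by positivity)]
      _ ≤ ENNReal.ofReal (C * Real.sqrt n ^ δ * 2 ^ (3*(n:ℝ)+δ) * A * ρ ^ j) :=
          ENNReal.ofReal_le_ofReal (pow_calc hC hδ hL hA0 n j)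
      _ = _ := by
          rw [ENNReal.ofReal_mul (by positivity), ENNReal.ofReal_pow hρ0]
  -- assemble
  have hsplit := (lintegral_add_compl (μ := volume) g (Q.dilate 2 (by norm_num : (0:ℝ)<2)).measurableSet_set).symm
  have hzero : (∫⁻ w in (Q.dilate 2 (by norm_num : (0:ℝ)<2)).set, g w) = 0 := by
    rw [← lintegral_indicator (Q.dilate 2 (by norm_num : (0:ℝ)<2)).measurableSet_set]
    have h0 : (Q.dilate 2 (by norm_num : (0:ℝ)<2)).set.indicator g = fun _ => 0 := by
      funext w
      by_cases hw : w ∈ (Q.dilate 2 (by norm_num : (0:ℝ)<2)).set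
      · rw [Set.indicator_of_mem hw, hgdef]
        simp [hvan w hw]
      · rw [Set.indicator_of_notMem hw]
    rw [h0]
    exact lintegral_zero
  calc (∫⁻ w, g w) = (∫⁻ w in (Q.dilate 2 (by norm_num : (0:ℝ)<2)).set, g w)
        + (∫⁻ w in ((Q.dilate 2 (by norm_num : (0:ℝ)<2)).set)ᶜ, g w) := hsplit
    _ = ∫⁻ w in ⋃ j, B j, g w := by rw [hzero, zero_add, hUnion]
    _ = ∑' j, ∫⁻ w in B j, g w := lintegral_iUnion hBmeas hBdisj g
    _ ≤ ∑' j : ℕ, ENNReal.ofReal (C * Real.sqrt n ^ δ * 2 ^ (3*(n:ℝ)+δ) * A)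
          * (ENNReal.ofReal ρ) ^ j := ENNReal.tsum_le_tsum hannulus
    _ = ENNReal.ofReal (C * Real.sqrt n ^ δ * 2 ^ (3*(n:ℝ)+δ) * A)
          * ∑' j : ℕ, (ENNReal.ofReal ρ) ^ j := ENNReal.tsum_mul_left
    _ = ENNReal.ofReal (C * Real.sqrt n ^ δ * 2 ^ (3*(n:ℝ)+δ) * A)
          * (1 - ENNReal.ofReal ρ)⁻¹ := by rw [ENNReal.tsum_geometric]
    _ = ENNReal.ofReal (C * Real.sqrt n ^ δ * 2 ^ (3*(n:ℝ)+δ) * A)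
          * ENNReal.ofReal ((1 - ρ)⁻¹) := by
          rw [ENNReal.ofReal_inv_of_pos (by linarith), ENNReal.ofReal_sub _ hρ0,
            ENNReal.ofReal_one]
    _ = ENNReal.ofReal ((C * Real.sqrt n ^ δ * 2 ^ (3*(n:ℝ)+δ) * (1 - ρ)⁻¹) * A) := by
          rw [← ENNReal.ofReal_mul (by positivity)]
          congr 1
          ring


lemma diff_bound {n : ℕ} (k : Sp n → Sp n → ℝ) (hkm : Measurable (Function.uncurry k))
    {C δ : ℝ} (hC : 0 < C) (hδ : 0 < δ)
    (hker : ∀ (Q : Cube n), ∀ x ∈ Q.set, ∀ x' ∈ Q.set,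
      ∀ y ∉ (Q.dilate 2 (by norm_num)).set,
        |k x y - k x' y| ≤ C * ‖x - x'‖ ^ δ / ‖x - y‖ ^ ((n : ℝ) + δ))
    (T : (Sp n → ℝ) → (Sp n → ℝ))
    (hT2 : ∀ g : Sp n → ℝ, Integrable g → ∀ x ∉ tsupport g, T g x = ∫ y, k x y * g y)
    (Q : Cube n) (f : Sp n → ℝ) (hf : Integrable f)
    {y : Sp n} (hy : y ∈ Q.set) {A : ℝ} (hA0 : 0 ≤ A)
    (hA : ∀ P : Cube n, y ∈ P.set →
      (∫⁻ w in P.set, ENNReal.ofReal |f w|) ≤ ENNReal.ofReal A * volume P.set) :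
    ∀ z ∈ Q.set,
      |T (fun w => f w - ((Q.dilate 2 (by norm_num)).set).indicator f w) z
        - T (fun w => f w - ((Q.dilate 2 (by norm_num)).set).indicator f w) Q.center|
        ≤ (C * Real.sqrt n ^ δ * 2 ^ (3*(n:ℝ)+δ) * (1 - (2:ℝ) ^ (-δ))⁻¹) * A := by
  have hρ0 : (0:ℝ) ≤ 2 ^ (-δ) := Real.rpow_nonneg (by norm_num) _
  have hρ1 : (2:ℝ) ^ (-δ) < 1 := by
    rw [Real.rpow_neg (by norm_num), inv_lt_one_iff₀]
    right
    rw [show (1:ℝ) = 1 ^ δ from (Real.one_rpow δ).symm]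
    exact Real.rpow_lt_rpow (by norm_num) (by norm_num) hδ
  have hK0 : 0 ≤ (C * Real.sqrt n ^ δ * 2 ^ (3*(n:ℝ)+δ) * (1 - (2:ℝ) ^ (-δ))⁻¹) * A := by
    apply mul_nonneg _ hA0
    apply mul_nonneg _ (inv_nonneg.2 (by linarith))
    exact mul_nonneg (mul_nonneg hC.le (Real.rpow_nonneg (Real.sqrt_nonneg _) _))
      (Real.rpow_nonneg (by norm_num) _)
  set D2 := (Q.dilate 2 (by norm_num : (0:ℝ) < 2)).set with hD2
  set f₂ : Sp n → ℝ := fun w => f w - D2.indicator f w with hf₂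
  have hvan : ∀ w ∈ D2, f₂ w = 0 := by
    intro w hw
    simp [hf₂, Set.indicator_of_mem hw]
  have hdom : ∀ w, |f₂ w| ≤ |f w| := by
    intro w
    by_cases hw : w ∈ D2
    · rw [hvan w hw]; simp [abs_nonneg]
    · simp [hf₂, Set.indicator_of_notMem hw]
  have hD2meas : MeasurableSet D2 := (Q.dilate 2 (by norm_num)).measurableSet_set
  have hf₂int : Integrable f₂ := hf.sub (hf.indicator hD2meas)
  have hts : ∀ z ∈ Q.set, z ∉ tsupport f₂ := by
    intro z hz hmem
    have h2 : Function.support f₂ ⊆ D2ᶜ := by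
      intro w hw
      intro hwD
      exact hw (hvan w hwD)
    have h1 : tsupport f₂ ⊆ (interior D2)ᶜ := by
      calc closure (Function.support f₂) ⊆ closure D2ᶜ := closure_mono h2
        _ = (interior D2)ᶜ := closure_compl
    exact (h1 hmem) (Q.mem_interior_dilate hz)
  have hkmz : ∀ z : Sp n, Measurable (fun w => k z w) :=
    fun z => hkm.comp measurable_prodMk_left
  have hf₂m : AEStronglyMeasurable f₂ volume :=
    hf.aestronglyMeasurable.sub (hf.aestronglyMeasurable.indicator hD2meas)
  have hΔint : ∀ z ∈ Q.set, Integrable (fun w => (k z w - k Q.center w) * f₂ w) := by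
    intro z hz
    constructor
    · exact (((hkmz z).sub (hkmz Q.center)).aestronglyMeasurable.mul hf₂m)
    · rw [hasFiniteIntegral_iff_norm]
      have hb := annuli_bound k hC hδ hker Q f f₂ hvan hdom hy hA0 hA hz Q.center_mem
      refine lt_of_le_of_lt ?_ (lt_of_le_of_lt hb ENNReal.ofReal_lt_top)
      apply le_of_eq
      simp only [Real.norm_eq_abs]
  intro z hz
  by_cases HI : Integrable (fun w => k Q.center w * f₂ w)
  · have hzsum : (fun w => k z w * f₂ w)
        = (fun w => (k z w - k Q.center w) * f₂ w) + (fun w => k Q.center w * f₂ w) := by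
      funext w; simp only [Pi.add_apply]; ring
    have hzint : Integrable (fun w => k z w * f₂ w) := by
      rw [hzsum]; exact (hΔint z hz).add HI
    rw [hT2 f₂ hf₂int z (hts z hz), hT2 f₂ hf₂int Q.center (hts Q.center Q.center_mem)]
    rw [← integral_sub hzint HI]
    rw [show (∫ w, (k z w * f₂ w - k Q.center w * f₂ w))
        = ∫ w, (k z w - k Q.center w) * f₂ w from by
      congr 1; funext w; ring]
    calc |∫ w, (k z w - k Q.center w) * f₂ w|
        ≤ (∫⁻ w, ENNReal.ofReal ‖(k z w - k Q.center w) * f₂ w‖).toReal := by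
          rw [← Real.norm_eq_abs]
          exact norm_integral_le_lintegral_norm _
      _ ≤ (ENNReal.ofReal
            ((C * Real.sqrt n ^ δ * 2 ^ (3*(n:ℝ)+δ) * (1 - (2:ℝ) ^ (-δ))⁻¹) * A)).toReal := by
          apply ENNReal.toReal_mono ENNReal.ofReal_ne_top
          have hb := annuli_bound k hC hδ hker Q f f₂ hvan hdom hy hA0 hA hz Q.center_mem
          simpa only [Real.norm_eq_abs] using hb
      _ = _ := ENNReal.toReal_ofReal hK0
  · have hznint : ¬ Integrable (fun w => k z w * f₂ w) := by
      intro h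
      apply HI
      have he : (fun w => k Q.center w * f₂ w)
          = (fun w => k z w * f₂ w) - (fun w => (k z w - k Q.center w) * f₂ w) := by
        funext w; simp only [Pi.sub_apply]; ring
      rw [he]
      exact h.sub (hΔint z hz)
    rw [hT2 f₂ hf₂int z (hts z hz), hT2 f₂ hf₂int Q.center (hts Q.center Q.center_mem),
      integral_undef hznint, integral_undef HI]
    simpa using hK0



lemma key {n : ℕ} (k : Sp n → Sp n → ℝ) (hkm : Measurable (Function.uncurry k))
    {C δ : ℝ} (hC : 0 < C) (hδ : 0 < δ)
    (hker : ∀ (Q : Cube n), ∀ x ∈ Q.set, ∀ x' ∈ Q.set,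
      ∀ y ∉ (Q.dilate 2 (by norm_num)).set,
        |k x y - k x' y| ≤ C * ‖x - x'‖ ^ δ / ‖x - y‖ ^ ((n : ℝ) + δ))
    (T : (Sp n → ℝ) → (Sp n → ℝ))
    (hadd : ∀ g₁ g₂ : Sp n → ℝ, Integrable g₁ → Integrable g₂ → T (g₁ + g₂) = T g₁ + T g₂)
    (CT : ℝ)
    (hT1 : ∀ g : Sp n → ℝ, Integrable g → ∀ lam : ℝ, 0 < lam →
      volume {x | ENNReal.ofReal lam < ENNReal.ofReal |T g x|}
        ≤ ENNReal.ofReal CT * (∫⁻ x, ENNReal.ofReal |g x|) / ENNReal.ofReal lam)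
    (hT2 : ∀ g : Sp n → ℝ, Integrable g → ∀ x ∉ tsupport g, T g x = ∫ y, k x y * g y)
    {s : ℝ} (hs0 : 0 < s)
    (Q : Cube n) (f : Sp n → ℝ) (hf : Integrable f) {y : Sp n} (hy : y ∈ Q.set) :
    ENNReal.ofReal (osc (T f) s Q) ≤
      ENNReal.ofReal (max (2 * (C * Real.sqrt n ^ δ * 2 ^ (3*(n:ℝ)+δ) * (1 - (2:ℝ) ^ (-δ))⁻¹))
        (2 ^ (n+2) * max CT 1 / s)) * maximal f y := by
  classical
  set K₁ := C * Real.sqrt n ^ δ * 2 ^ (3*(n:ℝ)+δ) * (1 - (2:ℝ) ^ (-δ))⁻¹ with hK₁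
  set cst := max (2 * K₁) (2 ^ (n+2) * max CT 1 / s) with hcst
  have hCT1 : (0:ℝ) < max CT 1 := lt_of_lt_of_le one_pos (le_max_right CT 1)
  have hcpos : 0 < cst :=
    lt_of_lt_of_le (div_pos (mul_pos (pow_pos two_pos _) hCT1) hs0) (le_max_right _ _)
  by_cases htop : maximal f y = ⊤
  · rw [htop, ENNReal.mul_top (ENNReal.ofReal_pos.2 hcpos).ne']
    exact le_top
  set A := (maximal f y).toReal with hAdef
  have hAeq : ENNReal.ofReal A = maximal f y := ENNReal.ofReal_toReal htop
  have hA0 : 0 ≤ A := ENNReal.toReal_nonneg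
  have hAbound : ∀ P : Cube n, y ∈ P.set →
      (∫⁻ w in P.set, ENNReal.ofReal |f w|) ≤ ENNReal.ofReal A * volume P.set := by
    intro P hyP
    have h1 : (∫⁻ w in P.set, ENNReal.ofReal |f w|) / volume P.set ≤ maximal f y :=
      le_iSup (fun (Z : {R : Cube n // y ∈ R.set}) =>
        (∫⁻ w in Z.1.set, ENNReal.ofReal |f w|) / volume Z.1.set) ⟨P, hyP⟩
    rw [← hAeq] at h1
    rwa [ENNReal.div_le_iff_le_mul (Or.inl P.volume_set_pos.ne') (Or.inl P.volume_set_ne_top)] at h1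
  suffices hosc : osc (T f) s Q ≤ cst * A by
    calc ENNReal.ofReal (osc (T f) s Q) ≤ ENNReal.ofReal (cst * A) :=
          ENNReal.ofReal_le_ofReal hosc
      _ = ENNReal.ofReal cst * ENNReal.ofReal A := ENNReal.ofReal_mul hcpos.le
      _ = _ := by rw [hAeq]
  -- split f
  set D2 := (Q.dilate 2 (by norm_num : (0:ℝ) < 2)).set with hD2
  have hD2meas : MeasurableSet D2 := (Q.dilate 2 (by norm_num)).measurableSet_set
  set f₁ : Sp n → ℝ := D2.indicator f with hf₁def
  set f₂ : Sp n → ℝ := fun w => f w - D2.indicator f w with hf₂def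
  have hf₁int : Integrable f₁ := hf.indicator hD2meas
  have hf₂int : Integrable f₂ := hf.sub hf₁int
  have hTsplit : ∀ w, T f w = T f₁ w + T f₂ w := by
    intro w
    have hfe : f = f₁ + f₂ := by
      funext u; simp only [Pi.add_apply, hf₁def, hf₂def]; ring
    conv_lhs => rw [hfe]
    rw [hadd f₁ f₂ hf₁int hf₂int]
    rfl
  set c₀ := T f₂ Q.center with hc₀
  have hpart2 : ∀ z ∈ Q.set, |T f₂ z - c₀| ≤ K₁ * A :=
    diff_bound k hkm hC hδ hker T hT2 Q f hf hy hA0 hAbound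
  have hc2K : 2 * K₁ ≤ cst := le_max_left _ _
  have hsub : {w ∈ Q.set | cst * A < |T f w - c₀|} ⊆ {z : Sp n | cst * A / 2 < |T f₁ z|} := by
    rintro z ⟨hzQ, hzgt⟩
    simp only [Set.mem_setOf_eq]
    by_contra hcon
    push_neg at hcon
    have h2 := hpart2 z hzQ
    have h3 : |T f z - c₀| ≤ |T f₁ z| + |T f₂ z - c₀| := by
      rw [hTsplit z, show T f₁ z + T f₂ z - c₀ = T f₁ z + (T f₂ z - c₀) from by ring]
      exact abs_add_le _ _
    have hK₁A : K₁ * A ≤ cst * A / 2 := by nlinarith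
    linarith
  have hvolQ : volume Q.set = ENNReal.ofReal (Q.side ^ n) := Q.volume_set
  have hRHSpos : (0:ℝ≥0∞) < ENNReal.ofReal s * volume Q.set :=
    ENNReal.mul_pos (ENNReal.ofReal_pos.2 hs0).ne' Q.volume_set_pos.ne'
  have hvolD2 : volume D2 = ENNReal.ofReal ((2 * Q.side) ^ n) :=
    (Q.dilate 2 (by norm_num : (0:ℝ) < 2)).volume_set
  have hf₁lint : (∫⁻ x, ENNReal.ofReal |f₁ x|) ≤ ENNReal.ofReal A * volume D2 := by
    have heq : (fun x => ENNReal.ofReal |f₁ x|)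
        = D2.indicator (fun x => ENNReal.ofReal |f x|) := by
      funext x
      by_cases hx : x ∈ D2
      · rw [Set.indicator_of_mem hx]; simp [hf₁def, Set.indicator_of_mem hx]
      · rw [Set.indicator_of_notMem hx]; simp [hf₁def, Set.indicator_of_notMem hx]
    rw [heq, lintegral_indicator hD2meas]
    exact hAbound (Q.dilate 2 (by norm_num)) (Q.subset_dilate 2 (by norm_num) one_le_two hy)
  have hvol1 : volume {z : Sp n | cst * A / 2 < |T f₁ z|} < ENNReal.ofReal s * volume Q.set := by
    by_cases hA0' : A = 0
    · have hnull : ∀ m : ℕ, volume {z : Sp n | 1 / ((m:ℝ)+1) < |T f₁ z|} = 0 := by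
        intro m
        have hlam : (0:ℝ) < 1 / ((m:ℝ)+1) := by positivity
        have h1 := hT1 f₁ hf₁int (1 / ((m:ℝ)+1)) hlam
        have hzint : (∫⁻ x, ENNReal.ofReal |f₁ x|) = 0 := by
          refine le_antisymm ?_ zero_le
          simpa [hA0'] using hf₁lint
        have hsetsub : {z : Sp n | 1 / ((m:ℝ)+1) < |T f₁ z|}
            ⊆ {x : Sp n | ENNReal.ofReal (1 / ((m:ℝ)+1)) < ENNReal.ofReal |T f₁ x|} :=
          fun z hzm => (ENNReal.ofReal_lt_ofReal_iff (lt_trans hlam hzm)).2 hzm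
        refine le_antisymm ?_ zero_le
        calc volume {z : Sp n | 1 / ((m:ℝ)+1) < |T f₁ z|} ≤ _ := measure_mono hsetsub
          _ ≤ ENNReal.ofReal CT * (∫⁻ x, ENNReal.ofReal |f₁ x|) / ENNReal.ofReal (1/((m:ℝ)+1)) :=
              h1
          _ = 0 := by rw [hzint]; simp
      have hsub0 : {z : Sp n | cst * A / 2 < |T f₁ z|}
          ⊆ ⋃ m : ℕ, {z : Sp n | 1 / ((m:ℝ)+1) < |T f₁ z|} := by
        intro z hzm
        simp only [Set.mem_setOf_eq] at hzm
        have hpos : 0 < |T f₁ z| := by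
          have hz0 : cst * A / 2 = 0 := by rw [hA0']; ring
          rwa [hz0] at hzm
        obtain ⟨m, hm⟩ := exists_nat_one_div_lt hpos
        exact Set.mem_iUnion.2 ⟨m, hm⟩
      calc volume {z : Sp n | cst * A / 2 < |T f₁ z|} ≤ volume _ := measure_mono hsub0
        _ = 0 := measure_iUnion_null hnull
        _ < _ := hRHSpos
    · have hApos : 0 < A := lt_of_le_of_ne hA0 (Ne.symm hA0')
      have hlam : 0 < cst * A / 2 := by positivity
      have hsetsub : {z : Sp n | cst * A / 2 < |T f₁ z|}
          ⊆ {x : Sp n | ENNReal.ofReal (cst * A / 2) < ENNReal.ofReal |T f₁ x|} :=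
        fun z hzm => (ENNReal.ofReal_lt_ofReal_iff (lt_trans hlam hzm)).2 hzm
      have h1 := hT1 f₁ hf₁int (cst * A / 2) hlam
      calc volume {z : Sp n | cst * A / 2 < |T f₁ z|}
          ≤ _ := measure_mono hsetsub
        _ ≤ ENNReal.ofReal CT * (∫⁻ x, ENNReal.ofReal |f₁ x|) / ENNReal.ofReal (cst * A / 2) :=
            h1
        _ ≤ ENNReal.ofReal (max CT 1) * (ENNReal.ofReal A * ENNReal.ofReal ((2 * Q.side) ^ n))
              / ENNReal.ofReal (cst * A / 2) := by
            gcongr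
            · exact le_max_left CT 1
            · rw [← hvolD2]; exact hf₁lint
        _ = ENNReal.ofReal (max CT 1 * (A * (2 * Q.side) ^ n) / (cst * A / 2)) := by
            rw [← ENNReal.ofReal_mul hA0, ← ENNReal.ofReal_mul hCT1.le,
              ← ENNReal.ofReal_div_of_pos hlam]
        _ < ENNReal.ofReal s * volume Q.set := by
            rw [hvolQ, ← ENNReal.ofReal_mul hs0.le]
            have hLp : 0 < Q.side ^ n := pow_pos Q.side_pos n
            apply (ENNReal.ofReal_lt_ofReal_iff (by positivity)).2
            have hc2 : 2 ^ (n+2) * max CT 1 / s ≤ cst := le_max_right _ _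
            have key1 : 2 ^ (n+2) * max CT 1 ≤ cst * s := by
              rw [div_le_iff₀ hs0] at hc2; linarith
            rw [mul_pow 2 Q.side n, div_lt_iff₀ hlam]
            have h2n : (0:ℝ) < 2 ^ n := pow_pos two_pos n
            have hexp : (2:ℝ) ^ (n+2) = 4 * 2 ^ n := by rw [pow_add]; ring
            rw [hexp] at key1
            have hmul := mul_le_mul_of_nonneg_right key1
              (le_of_lt (by positivity : (0:ℝ) < A * Q.side ^ n / 2))
            have hposq : 0 < (CT ⊔ 1) * A * 2 ^ n * Q.side ^ n := by positivity
            nlinarith [hmul, hposq]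
  have hmem : (cst * A) ∈ {α : ℝ | 0 ≤ α ∧
      volume {w ∈ Q.set | α < |T f w - c₀|} < ENNReal.ofReal s * volume Q.set} :=
    ⟨by positivity, lt_of_le_of_lt (measure_mono hsub) hvol1⟩
  have hbdd : BddBelow (Set.range fun c' : ℝ => sInf {α : ℝ | 0 ≤ α ∧
      volume {w ∈ Q.set | α < |T f w - c'|} < ENNReal.ofReal s * volume Q.set}) := by
    refine ⟨0, ?_⟩
    rintro b ⟨c', rfl⟩
    exact Real.sInf_nonneg (fun a ha => ha.1)
  calc osc (T f) s Q ≤ sInf {α : ℝ | 0 ≤ α ∧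
        volume {w ∈ Q.set | α < |T f w - c₀|} < ENNReal.ofReal s * volume Q.set} := by
        unfold osc
        exact ciInf_le hbdd c₀
    _ ≤ cst * A := csInf_le ⟨0, fun a ha => ha.1⟩ hmem


/-- Let `k` be a kernel with the Hölder-type regularity
`|k(x,y) − k(x',y)| ≤ C |x−x'|^δ / |x−y|^{n+δ}` for `x, x' ∈ Q`, `y ∉ 2Q`, and let `T`
be a linear operator on integrable functions of weak type (1,1) represented by `k` off
the support. Then for `0 < s ≤ 1/2` there is `c > 0` such that for every cube `Q₀`,
every integrable `f` and every `x ∈ Q₀`: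
`M♯_{0,s,Q₀}(Tf)(x) ≤ c sup_{x ∈ Q ⊆ Q₀} inf_{y ∈ Q} Mf(y)`. -/
theorem statement4 {n : ℕ} (k : Sp n → Sp n → ℝ)
    (hkm : Measurable (Function.uncurry k)) (C δ : ℝ) (hC : 0 < C) (hδ : 0 < δ)
    (hker : ∀ (Q : Cube n), ∀ x ∈ Q.set, ∀ x' ∈ Q.set,
      ∀ y ∉ (Q.dilate 2 (by norm_num)).set,
        |k x y - k x' y| ≤ C * ‖x - x'‖ ^ δ / ‖x - y‖ ^ ((n : ℝ) + δ))
    (T : (Sp n → ℝ) → (Sp n → ℝ))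
    (hadd : ∀ g₁ g₂ : Sp n → ℝ, Integrable g₁ → Integrable g₂ → T (g₁ + g₂) = T g₁ + T g₂)
    (hsmul : ∀ (a : ℝ) (g : Sp n → ℝ), Integrable g → T (a • g) = a • T g)
    (CT : ℝ)
    (hT1 : ∀ g : Sp n → ℝ, Integrable g → ∀ lam : ℝ, 0 < lam →
      volume {x | ENNReal.ofReal lam < ENNReal.ofReal |T g x|}
        ≤ ENNReal.ofReal CT * (∫⁻ x, ENNReal.ofReal |g x|) / ENNReal.ofReal lam)
    (hT2 : ∀ g : Sp n → ℝ, Integrable g → ∀ x ∉ tsupport g, T g x = ∫ y, k x y * g y)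
    (s : ℝ) (hs0 : 0 < s) (hs : s ≤ 1 / 2) :
    ∃ c : ℝ, 0 < c ∧
      ∀ (Q₀ : Cube n) (f : Sp n → ℝ), Integrable f → ∀ x ∈ Q₀.set,
        sharpLoc (T f) s Q₀ x ≤
          ENNReal.ofReal c *
            ⨆ Q : {Q : Cube n // x ∈ Q.set ∧ Q.set ⊆ Q₀.set},
              ⨅ y : Q.1.set, maximal f ↑y := by
  classical
  have hCT1 : (0:ℝ) < max CT 1 := lt_of_lt_of_le one_pos (le_max_right CT 1)
  have hcpos : 0 < max (2 * (C * Real.sqrt n ^ δ * 2 ^ (3*(n:ℝ)+δ) * (1 - (2:ℝ) ^ (-δ))⁻¹))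
      (2 ^ (n+2) * max CT 1 / s) :=
    lt_of_lt_of_le (div_pos (mul_pos (pow_pos two_pos _) hCT1) hs0) (le_max_right _ _)
  refine ⟨max (2 * (C * Real.sqrt n ^ δ * 2 ^ (3*(n:ℝ)+δ) * (1 - (2:ℝ) ^ (-δ))⁻¹))
      (2 ^ (n+2) * max CT 1 / s), hcpos, ?_⟩
  intro Q₀ f hf x hx
  unfold sharpLoc
  apply iSup_le
  rintro ⟨Q, hxQ, hQsub⟩
  have hne0 : ENNReal.ofReal (max (2 * (C * Real.sqrt n ^ δ * 2 ^ (3*(n:ℝ)+δ)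
      * (1 - (2:ℝ) ^ (-δ))⁻¹)) (2 ^ (n+2) * max CT 1 / s)) ≠ 0 :=
    (ENNReal.ofReal_pos.2 hcpos).ne'
  have hkey : ∀ yy : Q.set, ENNReal.ofReal (osc (T f) s Q) ≤
      ENNReal.ofReal (max (2 * (C * Real.sqrt n ^ δ * 2 ^ (3*(n:ℝ)+δ)
        * (1 - (2:ℝ) ^ (-δ))⁻¹)) (2 ^ (n+2) * max CT 1 / s)) * maximal f ↑yy :=
    fun yy => key k hkm hC hδ hker T hadd CT hT1 hT2 hs0 Q f hf yy.2
  have hinf : ENNReal.ofReal (osc (T f) s Q) ≤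
      ENNReal.ofReal (max (2 * (C * Real.sqrt n ^ δ * 2 ^ (3*(n:ℝ)+δ)
        * (1 - (2:ℝ) ^ (-δ))⁻¹)) (2 ^ (n+2) * max CT 1 / s)) *
        ⨅ yy : Q.set, maximal f ↑yy := by
    rw [mul_comm, ← ENNReal.div_le_iff_le_mul (Or.inl hne0) (Or.inl ENNReal.ofReal_ne_top)]
    refine le_iInf fun yy => ?_
    rw [ENNReal.div_le_iff_le_mul (Or.inl hne0) (Or.inl ENNReal.ofReal_ne_top), mul_comm]
    exact hkey yy
  refine le_trans hinf (mul_le_mul_right ?_ _)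
  exact le_iSup (fun (Z : {R : Cube n // x ∈ R.set ∧ R.set ⊆ Q₀.set}) =>
    ⨅ yy : Z.1.set, maximal f ↑yy) ⟨Q, hxQ, hQsub⟩

end LocalMedian
end

section
/- Let 0 < s ≤ 1/2 and 1/2 ≤ t ≤ 1−s. Then there is a constant c_s such that for every cube Q ⊂ ℝⁿ and every locally integrable function f, (1/|Q|)∫_Q |f(y) − m_f(t,Q)| dy ≤ c_s · inf_{y ∈ Q} M♯f(y). -/
open MeasureTheory ENNReal

namespace LocalMedian

variable {n : ℕ}

section Aux
open Set Filter

lemma cube_eq_preimage {n : ℕ} (Q : Cube n) :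
    Q.set = (MeasurableEquiv.toLp 2 (Fin n → ℝ)).symm ⁻¹'
      (Set.univ.pi fun i => Set.Icc (Q.corner i) (Q.corner i + Q.side)) := by
  ext x
  simp only [Cube.set, Set.mem_preimage, Set.mem_pi, Set.mem_univ, forall_true_left,
    Set.mem_Icc, Set.mem_setOf_eq]
  rfl

lemma cube_volume {n : ℕ} (Q : Cube n) :
    volume Q.set = ENNReal.ofReal Q.side ^ n := by
  rw [cube_eq_preimage,
    (EuclideanSpace.volume_preserving_symm_measurableEquiv_toLp (Fin n)).measure_preimage
      ((MeasurableSet.univ_pi fun i => measurableSet_Icc).nullMeasurableSet),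
    volume_pi_pi]
  simp [Real.volume_Icc, Q.side_pos.le]

lemma cube_compact {n : ℕ} (Q : Cube n) : IsCompact Q.set := by
  rw [cube_eq_preimage]
  have : ((MeasurableEquiv.toLp 2 (Fin n → ℝ)).symm : Sp n → (Fin n → ℝ)) =
      (EuclideanSpace.equiv (Fin n) ℝ : Sp n → (Fin n → ℝ)) := rfl
  rw [this] at *
  exact ((EuclideanSpace.equiv (Fin n) ℝ).toHomeomorph.isCompact_preimage).mpr
    (isCompact_univ_pi fun i => isCompact_Icc)


/-- Tail bounds for the maximal median. -/
lemma median_tails {α : Type*} [MeasurableSpace α] {μ : Measure α} [IsFiniteMeasure μ]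
     (f : α → ℝ) (hf : AEMeasurable f μ) (hμ : μ Set.univ ≠ 0)
    {t : ℝ} (ht0 : 0 < t) (ht1 : t < 1) :
    letI m := sSup {M : ℝ | μ {y | f y < M} ≤ ENNReal.ofReal t * μ Set.univ}
    μ {y | f y < m} ≤ ENNReal.ofReal t * μ Set.univ ∧
      ENNReal.ofReal t * μ Set.univ ≤ μ {y | f y ≤ m} := by
  set T := ENNReal.ofReal t * μ Set.univ with hT
  have hTpos : 0 < T := ENNReal.mul_pos (by simp [ht0]) hμ
  have hTlt : T < μ Set.univ := by
    calc T < 1 * μ Set.univ := by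
          apply ENNReal.mul_lt_mul_left hμ (measure_ne_top μ _)
          simpa using ENNReal.ofReal_lt_one.mpr ht1
      _ = μ Set.univ := one_mul _
  set S := {M : ℝ | μ {y | f y < M} ≤ T} with hS
  have hmono : ∀ {M M' : ℝ}, M ≤ M' → μ {y | f y < M} ≤ μ {y | f y < M'} :=
    fun h => measure_mono (fun y hy => lt_of_lt_of_le hy h)
  -- S nonempty
  have hSne : S.Nonempty := by
    have hinter : ⋂ k : ℕ, {y | f y < -(k:ℝ)} = ∅ := by
      ext y; simp only [Set.mem_iInter, Set.mem_setOf_eq, Set.mem_empty_iff_false, iff_false,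
        not_forall, not_lt]
      obtain ⟨k, hk⟩ := exists_nat_gt (-(f y))
      exact ⟨k, by linarith⟩
    have htd : Tendsto (fun k : ℕ => μ {y | f y < -(k:ℝ)}) atTop (nhds 0) := by
      have := tendsto_measure_iInter_atTop (μ := μ)
        (s := fun k : ℕ => {y | f y < -(k:ℝ)})
        (fun k => (nullMeasurableSet_lt hf aemeasurable_const))
        (fun i j hij => Set.setOf_subset_setOf.mpr fun y hy => by
          have : (i:ℝ) ≤ j := Nat.cast_le.mpr hij; linarith)
        ⟨0, measure_ne_top μ _⟩
      rwa [hinter, measure_empty] at this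
      
    have := htd.eventually_lt_const hTpos
    obtain ⟨k, hk⟩ := this.exists
    exact ⟨-(k:ℝ), hk.le⟩
  -- S bounded above
  have hSbdd : BddAbove S := by
    have hunion : ⋃ k : ℕ, {y | f y < (k:ℝ)} = Set.univ := by
      ext y; simp only [Set.mem_iUnion, Set.mem_setOf_eq, Set.mem_univ, iff_true]
      obtain ⟨k, hk⟩ := exists_nat_gt (f y); exact ⟨k, hk⟩
    have htd : Tendsto (fun k : ℕ => μ {y | f y < (k:ℝ)}) atTop (nhds (μ Set.univ)) := by
      have := tendsto_measure_iUnion_atTop (μ := μ) (s := fun k : ℕ => {y | f y < (k:ℝ)})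
        (fun i j hij => Set.setOf_subset_setOf.mpr fun y hy => by
          have : (i:ℝ) ≤ j := Nat.cast_le.mpr hij; linarith)
      rwa [hunion] at this
    obtain ⟨k, hk⟩ := (htd.eventually_const_lt hTlt).exists
    refine ⟨k, fun M hM => ?_⟩
    by_contra h
    push_neg at h
    exact absurd (le_trans (hmono h.le) hM) (not_le.mpr hk)
  set m := sSup S with hm
  constructor
  · -- lower tail
    have hunion : {y | f y < m} = ⋃ k : ℕ, {y | f y < m - ((k:ℝ)+1)⁻¹} := by
      ext y; simp only [Set.mem_iUnion, Set.mem_setOf_eq]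
      constructor
      · intro hy
        obtain ⟨k, hk⟩ := exists_nat_one_div_lt (sub_pos.mpr hy)
        exact ⟨k, by rw [one_div] at hk; linarith⟩
      · rintro ⟨k, hk⟩
        have : (0:ℝ) < ((k:ℝ)+1)⁻¹ := by positivity
        linarith
    have hbound : ∀ k : ℕ, μ {y | f y < m - ((k:ℝ)+1)⁻¹} ≤ T := by
      intro k
      have hlt : m - ((k:ℝ)+1)⁻¹ < m := by
        have : (0:ℝ) < ((k:ℝ)+1)⁻¹ := by positivity
        linarith
      obtain ⟨M, hMS, hM⟩ := exists_lt_of_lt_csSup hSne hlt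
      exact le_trans (hmono hM.le) hMS
    rw [hunion]
    have htd := tendsto_measure_iUnion_atTop (μ := μ)
      (s := fun k : ℕ => {y | f y < m - ((k:ℝ)+1)⁻¹})
      (fun i j hij => Set.setOf_subset_setOf.mpr fun y hy => by
        have : ((j:ℝ)+1)⁻¹ ≤ ((i:ℝ)+1)⁻¹ := by
          apply inv_anti₀ (by positivity)
          have : (i:ℝ) ≤ j := Nat.cast_le.mpr hij
          linarith
        linarith)
    exact le_of_tendsto htd (Filter.Eventually.of_forall hbound)
  · -- upper tail
    have hinter : {y | f y ≤ m} = ⋂ k : ℕ, {y | f y < m + ((k:ℝ)+1)⁻¹} := by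
      ext y; simp only [Set.mem_iInter, Set.mem_setOf_eq]
      constructor
      · intro hy k
        have : (0:ℝ) < ((k:ℝ)+1)⁻¹ := by positivity
        linarith
      · intro h
        by_contra hc
        push_neg at hc
        obtain ⟨k, hk⟩ := exists_nat_one_div_lt (sub_pos.mpr hc)
        rw [one_div] at hk
        have := h k
        linarith
    have hbound : ∀ k : ℕ, T ≤ μ {y | f y < m + ((k:ℝ)+1)⁻¹} := by
      intro k
      have hnotS : m + ((k:ℝ)+1)⁻¹ ∉ S := by
        intro hmem
        have : m + ((k:ℝ)+1)⁻¹ ≤ m := le_csSup hSbdd hmem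
        have : (0:ℝ) < ((k:ℝ)+1)⁻¹ := by positivity
        linarith
      exact (not_le.mp hnotS).le
    rw [hinter]
    have htd := tendsto_measure_iInter_atTop (μ := μ)
      (s := fun k : ℕ => {y | f y < m + ((k:ℝ)+1)⁻¹})
      (fun k => nullMeasurableSet_lt hf aemeasurable_const)
      (fun i j hij => Set.setOf_subset_setOf.mpr fun y hy => by
        have : ((j:ℝ)+1)⁻¹ ≤ ((i:ℝ)+1)⁻¹ := by
          apply inv_anti₀ (by positivity)
          have : (i:ℝ) ≤ j := Nat.cast_le.mpr hij
          linarith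
        linarith)
      ⟨0, measure_ne_top μ _⟩
    exact ge_of_tendsto htd (Filter.Eventually.of_forall hbound)

lemma abstract_bound {α : Type*} [MeasurableSpace α] {μ : Measure α} [IsFiniteMeasure μ]
     (f : α → ℝ) (hf : AEMeasurable f μ) (hμ : μ Set.univ ≠ 0)
    {s t : ℝ} (hs0 : 0 < s) (hst : s + t ≤ 1) (hts : s ≤ t) (ht0 : 0 < t) (c : ℝ) :
    ∫⁻ y, ENNReal.ofReal
        |f y - sSup {M : ℝ | μ {y | f y < M} ≤ ENNReal.ofReal t * μ Set.univ}| ∂μ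
      ≤ ENNReal.ofReal (1 + s⁻¹) * ∫⁻ y, ENNReal.ofReal |f y - c| ∂μ := by
  have ht1 : t < 1 := by linarith
  obtain ⟨hlow, hup⟩ := median_tails f hf hμ ht0 ht1
  set m := sSup {M : ℝ | μ {y | f y < M} ≤ ENNReal.ofReal t * μ Set.univ} with hm
  set L := ∫⁻ y, ENNReal.ofReal |f y - c| ∂μ with hL
  have habs : AEMeasurable (fun y => |f y - c|) μ := by
    have h0 : AEMeasurable (fun y => f y - c) μ := hf.sub aemeasurable_const
    simpa [Real.norm_eq_abs] using h0.norm
  have hLmeas : AEMeasurable (fun y => ENNReal.ofReal |f y - c|) μ := habs.ennreal_ofReal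
  -- both tails have measure ≥ s * μ univ
  have key₁ : ENNReal.ofReal s * μ Set.univ ≤ μ {y | m ≤ f y} := by
    have hsplit : μ Set.univ ≤ μ {y | f y < m} + μ {y | m ≤ f y} := by
      calc μ Set.univ = μ ({y | f y < m} ∪ {y | m ≤ f y}) := by
            congr 1; ext y; simp [lt_or_ge]
        _ ≤ _ := measure_union_le _ _
    have h1 : ENNReal.ofReal s * μ Set.univ + ENNReal.ofReal t * μ Set.univ
        ≤ μ {y | m ≤ f y} + ENNReal.ofReal t * μ Set.univ := by
      calc ENNReal.ofReal s * μ Set.univ + ENNReal.ofReal t * μ Set.univ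
          = ENNReal.ofReal (s + t) * μ Set.univ := by
            rw [ENNReal.ofReal_add hs0.le ht0.le, add_mul]
        _ ≤ 1 * μ Set.univ := mul_le_mul_left (ENNReal.ofReal_le_one.mpr hst) _
        _ = μ Set.univ := one_mul _
        _ ≤ μ {y | f y < m} + μ {y | m ≤ f y} := hsplit
        _ ≤ ENNReal.ofReal t * μ Set.univ + μ {y | m ≤ f y} := add_le_add_left hlow _
        _ = μ {y | m ≤ f y} + ENNReal.ofReal t * μ Set.univ := add_comm _ _
    exact (ENNReal.add_le_add_iff_right
      (ENNReal.mul_ne_top ENNReal.ofReal_ne_top (measure_ne_top μ _))).mp h1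
  have key₂ : ENNReal.ofReal s * μ Set.univ ≤ μ {y | f y ≤ m} :=
    le_trans (mul_le_mul_left (ENNReal.ofReal_le_ofReal hts) _) hup
  -- Chebyshev
  have hcheb : ENNReal.ofReal |m - c| * (ENNReal.ofReal s * μ Set.univ) ≤ L := by
    rcases le_total c m with h | h
    · calc ENNReal.ofReal |m - c| * (ENNReal.ofReal s * μ Set.univ)
          ≤ ENNReal.ofReal |m - c| * μ {y | ENNReal.ofReal |m - c|
              ≤ ENNReal.ofReal |f y - c|} := by
            refine mul_le_mul_right (le_trans key₁ (measure_mono fun y hy => ?_)) _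
            refine ENNReal.ofReal_le_ofReal ?_
            rw [abs_of_nonneg (sub_nonneg.mpr h)]
            have : m - c ≤ f y - c := by simp only [Set.mem_setOf_eq] at hy; linarith
            exact le_trans this (le_abs_self _)
        _ ≤ L := mul_meas_ge_le_lintegral₀ hLmeas _
    · calc ENNReal.ofReal |m - c| * (ENNReal.ofReal s * μ Set.univ)
          ≤ ENNReal.ofReal |m - c| * μ {y | ENNReal.ofReal |m - c|
              ≤ ENNReal.ofReal |f y - c|} := by
            refine mul_le_mul_right (le_trans key₂ (measure_mono fun y hy => ?_)) _
            refine ENNReal.ofReal_le_ofReal ?_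
            rw [abs_of_nonpos (sub_nonpos.mpr h)]
            have : c - f y ≥ c - m := by simp only [Set.mem_setOf_eq] at hy; linarith
            calc -(m - c) = c - m := by ring
              _ ≤ c - f y := this
              _ = -(f y - c) := by ring
              _ ≤ |f y - c| := neg_le_abs _
        _ ≤ L := mul_meas_ge_le_lintegral₀ hLmeas _
  have hconst : ENNReal.ofReal |m - c| * μ Set.univ ≤ ENNReal.ofReal s⁻¹ * L := by
    have heq : ENNReal.ofReal s⁻¹ * (ENNReal.ofReal |m - c| * (ENNReal.ofReal s * μ Set.univ))
        = ENNReal.ofReal |m - c| * μ Set.univ := by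
      have h1 : ENNReal.ofReal s⁻¹ * ENNReal.ofReal s = 1 := by
        rw [← ENNReal.ofReal_mul (by positivity), inv_mul_cancel₀ hs0.ne', ENNReal.ofReal_one]
      calc ENNReal.ofReal s⁻¹ * (ENNReal.ofReal |m - c| * (ENNReal.ofReal s * μ Set.univ))
          = (ENNReal.ofReal s⁻¹ * ENNReal.ofReal s) * (ENNReal.ofReal |m - c| * μ Set.univ) := by
            ring
        _ = ENNReal.ofReal |m - c| * μ Set.univ := by rw [h1, one_mul]
    rw [← heq]
    exact mul_le_mul_right hcheb _
  calc ∫⁻ y, ENNReal.ofReal |f y - m| ∂μ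
      ≤ ∫⁻ y, (ENNReal.ofReal |f y - c| + ENNReal.ofReal |m - c|) ∂μ := by
        refine lintegral_mono fun y => ?_
        rw [← ENNReal.ofReal_add (abs_nonneg _) (abs_nonneg _)]
        refine ENNReal.ofReal_le_ofReal ?_
        calc |f y - m| ≤ |f y - c| + |c - m| := abs_sub_le _ _ _
          _ = |f y - c| + |m - c| := by rw [abs_sub_comm c m]
    _ = L + ENNReal.ofReal |m - c| * μ Set.univ := by
        rw [lintegral_add_right _ measurable_const, lintegral_const]
    _ ≤ L + ENNReal.ofReal s⁻¹ * L := add_le_add_right hconst _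
    _ = (1 + ENNReal.ofReal s⁻¹) * L := by ring
    _ = ENNReal.ofReal (1 + s⁻¹) * L := by
        rw [ENNReal.ofReal_add zero_le_one (by positivity), ENNReal.ofReal_one]

end Aux

/-- Let `0 < s ≤ 1/2` and `1/2 ≤ t ≤ 1 − s`. There is a constant
`c_s > 0` such that for every cube `Q ⊂ ℝⁿ` and every locally integrable `f`:
`(1/|Q|) ∫_Q |f(y) − m_f(t,Q)| dy ≤ c_s inf_{y ∈ Q} M♯f(y)`. -/
theorem statement8 {n : ℕ} (s t : ℝ) (hs0 : 0 < s) (hs : s ≤ 1 / 2)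
    (ht : 1 / 2 ≤ t) (ht1 : t ≤ 1 - s) :
    ∃ c : ℝ, 0 < c ∧
      ∀ (Q : Cube n) (f : Sp n → ℝ), LocallyIntegrable f volume →
        (∫⁻ y in Q.set, ENNReal.ofReal |f y - median f t Q|) / volume Q.set
          ≤ ENNReal.ofReal c * ⨅ y : Q.set, fsSharp f ↑y := by
  refine ⟨1 + s⁻¹, by positivity, fun Q f hfloc => ?_⟩
  set μ := volume.restrict Q.set with hmudef
  have hQmeas : MeasurableSet Q.set := (cube_compact Q).isClosed.measurableSet
  have hv0 : volume Q.set ≠ 0 := by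
    rw [cube_volume Q]
    exact pow_ne_zero _ (ENNReal.ofReal_pos.mpr Q.side_pos).ne'
  have hvtop : volume Q.set ≠ ⊤ := (cube_compact Q).measure_lt_top.ne
  haveI : IsFiniteMeasure μ :=
    ⟨by rw [Measure.restrict_apply_univ]; exact lt_top_iff_ne_top.mpr hvtop⟩
  have hmuuniv : μ Set.univ = volume Q.set := Measure.restrict_apply_univ _
  have hmu0 : μ Set.univ ≠ 0 := by rw [hmuuniv]; exact hv0
  have hf : AEMeasurable f μ := hfloc.aestronglyMeasurable.aemeasurable.restrict
  set c := cubeAvg f Q with hc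
  have hmed : median f t Q
      = sSup {M : ℝ | μ {y | f y < M} ≤ ENNReal.ofReal t * μ Set.univ} := by
    have hsets : ∀ M : ℝ, {y ∈ Q.set | f y < M} = {y | f y < M} ∩ Q.set := by
      intro M; ext y; simp [Set.mem_setOf_eq, and_comm]
    unfold median
    congr 1
    ext M
    simp only [Set.mem_setOf_eq, hmudef, Measure.restrict_apply' hQmeas,
      Measure.restrict_apply_univ, hsets, Set.univ_inter]
  have hb := abstract_bound f hf hmu0 hs0
    (by linarith : s + t ≤ 1) (by linarith : s ≤ t) (by linarith : (0:ℝ) < t) c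
  rw [← hmed] at hb
  have hint : Integrable f μ := hfloc.integrableOn_isCompact (cube_compact Q)
  have hintabs : Integrable (fun y => |f y - c|) μ := (hint.sub (integrable_const c)).abs
  have hLI : ∫⁻ y, ENNReal.ofReal |f y - c| ∂μ = ENNReal.ofReal (∫ y, |f y - c| ∂μ) :=
    (ofReal_integral_eq_lintegral_ofReal hintabs
      (Filter.Eventually.of_forall fun y => abs_nonneg _)).symm
  have hAle : ENNReal.ofReal (cubeAvg (fun y => |f y - c|) Q) ≤ ⨅ y : Q.set, fsSharp f ↑y := by
    refine le_iInf fun y => ?_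
    exact le_iSup_of_le ⟨Q, y.2⟩ (le_refl _)
  have hA : ENNReal.ofReal (cubeAvg (fun y => |f y - c|) Q)
      = (∫⁻ y, ENNReal.ofReal |f y - c| ∂μ) / volume Q.set := by
    rw [hLI]
    unfold cubeAvg
    rw [ENNReal.ofReal_mul (by positivity),
      ENNReal.ofReal_inv_of_pos (ENNReal.toReal_pos hv0 hvtop),
      ENNReal.ofReal_toReal hvtop, ENNReal.div_eq_inv_mul]
  calc (∫⁻ y in Q.set, ENNReal.ofReal |f y - median f t Q|) / volume Q.set
      ≤ (ENNReal.ofReal (1 + s⁻¹) * ∫⁻ y, ENNReal.ofReal |f y - c| ∂μ) / volume Q.set :=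
        ENNReal.div_le_div_right hb _
    _ = ENNReal.ofReal (1 + s⁻¹)
        * ((∫⁻ y, ENNReal.ofReal |f y - c| ∂μ) / volume Q.set) := by
        simp [div_eq_mul_inv, mul_assoc]
    _ = ENNReal.ofReal (1 + s⁻¹) * ENNReal.ofReal (cubeAvg (fun y => |f y - c|) Q) := by
        rw [hA]
    _ ≤ ENNReal.ofReal (1 + s⁻¹) * ⨅ y : Q.set, fsSharp f ↑y := mul_le_mul_right hAle _

end LocalMedian
end
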